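/- arXiv:1501.06495 — 5 statements merged into one kernel-verified Lean document; each statement's English description precedes it below -/
import Mathlib

section
/- If for each letter i ∈ {1,…,d} there exists a word μ_i ∈ Λ* with μ_i i ∉ Λ*, then the product T_{μ_1}^*T_{μ_1} ⋯ T_{μ_d}^*T_{μ_d} equals the rank-one projection P_∅ onto C·e_∅. -/
open ContinuousLinearMap
open scoped Classical

/-- A factorial language on `d` letters: the empty word belongs to it and it is closed
under taking factors (subwords of consecutive letters). -/
def IsFactorialLang {d : ℕ} (Λ : Set (List (Fin d))) : Prop :=
  [] ∈ Λ ∧ ∀ u v w : List (Fin d), u ++ v ++ w ∈ Λ → v ∈ Λ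

noncomputable section

variable {d : ℕ} {H : Type*} [NormedAddCommGroup H] [InnerProductSpace ℂ H] [CompleteSpace H]

/-- The operator `T_μ = T_{μ₁} ⋯ T_{μₙ}` associated with a word `μ`, with `T_∅ = I`. -/
def Tw (T : Fin d → H →L[ℂ] H) : List (Fin d) → H →L[ℂ] H
  | [] => 1
  | i :: μ => T i * Tw T μ

/-- The defining property of the shift operators of the language `Λ` with respect to the
orthonormal (Hilbert) basis `e` indexed by the words of `Λ`:
`T_i e_ν = e_{iν}` if `iν ∈ Λ` and `T_i e_ν = 0` otherwise. -/
def IsShift {d : ℕ} (Λ : Set (List (Fin d))) (e : HilbertBasis {ν : List (Fin d) // ν ∈ Λ} ℂ H)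
    (T : Fin d → H →L[ℂ] H) : Prop :=
  ∀ (i : Fin d) (ν : {ν : List (Fin d) // ν ∈ Λ}),
    (∀ h : (i :: ν.1) ∈ Λ, T i (e ν) = e ⟨i :: ν.1, h⟩) ∧
    ((i :: ν.1) ∉ Λ → T i (e ν) = 0)

/-- Two vectors are equal if they have the same inner products against a Hilbert basis. -/
lemma hb_ext_vec {ι : Type*} (b : HilbertBasis ι ℂ H) {x y : H}
    (h : ∀ i, inner ℂ (b i) x = (inner ℂ (b i) y : ℂ)) : x = y := by
  apply b.repr.injective
  apply lp.ext
  funext i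
  rw [b.repr_apply_apply, b.repr_apply_apply, h i]

lemma Tw_apply {Λ : Set (List (Fin d))} (hΛ : IsFactorialLang Λ)
    (e : HilbertBasis {ν : List (Fin d) // ν ∈ Λ} ℂ H)
    (T : Fin d → H →L[ℂ] H) (hT : IsShift Λ e T) (μ : List (Fin d))
    (ν : {ν : List (Fin d) // ν ∈ Λ}) :
    Tw T μ (e ν) = if h : μ ++ ν.1 ∈ Λ then e ⟨μ ++ ν.1, h⟩ else 0 := by
  induction μ with
  | nil => simp [Tw, ν.2]
  | cons i μ ih =>
    rw [Tw, ContinuousLinearMap.mul_apply, ih]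
    simp only [List.cons_append]
    by_cases h : μ ++ ν.1 ∈ Λ
    · rw [dif_pos h]
      by_cases h2 : i :: (μ ++ ν.1) ∈ Λ
      · rw [(hT i ⟨μ ++ ν.1, h⟩).1 h2, dif_pos h2]
      · rw [(hT i ⟨μ ++ ν.1, h⟩).2 h2, dif_neg]
        exact h2
    · rw [dif_neg h, map_zero, dif_neg]
      intro h2
      exact h (hΛ.2 [i] (μ ++ ν.1) [] (by simpa using h2))

lemma Q_apply {Λ : Set (List (Fin d))} (hΛ : IsFactorialLang Λ)
    (e : HilbertBasis {ν : List (Fin d) // ν ∈ Λ} ℂ H)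
    (T : Fin d → H →L[ℂ] H) (hT : IsShift Λ e T) (μ : List (Fin d))
    (ν : {ν : List (Fin d) // ν ∈ Λ}) :
    (adjoint (Tw T μ) * Tw T μ) (e ν) = if μ ++ ν.1 ∈ Λ then (e ν : H) else 0 := by
  apply hb_ext_vec e
  intro w
  rw [ContinuousLinearMap.mul_apply, adjoint_inner_right, Tw_apply hΛ e T hT,
    Tw_apply hΛ e T hT]
  have horth := orthonormal_iff_ite.mp e.orthonormal
  by_cases hν : μ ++ ν.1 ∈ Λ
  · rw [dif_pos hν, if_pos hν]
    by_cases hw : μ ++ w.1 ∈ Λ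
    · rw [dif_pos hw, horth, horth]
      congr 1
      simp only [Subtype.mk.injEq, eq_iff_iff, Subtype.ext_iff]
      exact ⟨fun h => List.append_cancel_left h, fun h => by rw [h]⟩
    · rw [dif_neg hw, inner_zero_left, horth, if_neg]
      intro h
      rw [Subtype.ext_iff] at h
      exact hw (h ▸ hν)
  · rw [dif_neg hν, if_neg hν, inner_zero_right, inner_zero_right]

lemma Tprod_apply {Λ : Set (List (Fin d))} (hΛ : IsFactorialLang Λ)
    (e : HilbertBasis {ν : List (Fin d) // ν ∈ Λ} ℂ H)
    (T : Fin d → H →L[ℂ] H) (hT : IsShift Λ e T) (μ : Fin d → List (Fin d))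
    (l : List (Fin d)) (ν : {ν : List (Fin d) // ν ∈ Λ}) :
    ((l.map fun i => adjoint (Tw T (μ i)) * Tw T (μ i)).prod) (e ν) =
      if ∀ i ∈ l, μ i ++ ν.1 ∈ Λ then (e ν : H) else 0 := by
  induction l with
  | nil => simp
  | cons a t ih =>
    rw [List.map_cons, List.prod_cons, ContinuousLinearMap.mul_apply, ih]
    by_cases ht : ∀ i ∈ t, μ i ++ ν.1 ∈ Λ
    · rw [if_pos ht, Q_apply hΛ e T hT]
      by_cases ha : μ a ++ ν.1 ∈ Λ
      · rw [if_pos ha, if_pos]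
        intro i hi
        rcases List.mem_cons.mp hi with h | h
        · exact h ▸ ha
        · exact ht i h
      · rw [if_neg ha, if_neg]
        intro h
        exact ha (h a (List.mem_cons_self (a := a) (l := t)))
    · rw [if_neg ht, map_zero, if_neg]
      intro h
      exact ht fun i hi => h i (List.mem_cons_of_mem a hi)

/-- If for each letter `i` there is a word `μ_i ∈ Λ*` with `μ_i i ∉ Λ*`, then
`T_{μ_1}^*T_{μ_1} ⋯ T_{μ_d}^*T_{μ_d} = P_∅`, the rank-one projection onto `ℂ·e_∅`. -/
theorem stmt9 (Λ : Set (List (Fin d))) (hΛ : IsFactorialLang Λ)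
    (e : HilbertBasis {ν : List (Fin d) // ν ∈ Λ} ℂ H)
    (T : Fin d → H →L[ℂ] H) (hT : IsShift Λ e T)
    (μ : Fin d → List (Fin d)) (hμΛ : ∀ i, μ i ∈ Λ) (hμi : ∀ i, μ i ++ [i] ∉ Λ) :
    ((List.finRange d).map fun i => adjoint (Tw T (μ i)) * Tw T (μ i)).prod =
      (innerSL ℂ (e ⟨[], hΛ.1⟩)).smulRight (e ⟨[], hΛ.1⟩) := by
  apply ContinuousLinearMap.ext_on
    (Submodule.dense_iff_topologicalClosure_eq_top.mpr e.dense_span)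
  rintro x ⟨ν, rfl⟩
  rw [Tprod_apply hΛ e T hT]
  have horth := orthonormal_iff_ite.mp e.orthonormal
  rw [ContinuousLinearMap.smulRight_apply, innerSL_apply_apply, horth]
  obtain ⟨ν, hν⟩ := ν
  cases ν with
  | nil =>
    rw [if_pos, if_pos rfl, one_smul]
    intro i _
    simpa using hμΛ i
  | cons j t =>
    rw [if_neg, if_neg, zero_smul]
    · simp
    · intro h
      exact hμi j (hΛ.2 [] (μ j ++ [j]) t (by simpa using h j (List.mem_finRange j)))
end
end

section
/- Suppose μ_1,…,μ_n are n ≥ 1 distinct words in Λ*, all of the same length, such that T_{μ_1}^*T_{μ_1}⋯T_{μ_n}^*T_{μ_n} = P_∅. Then the operator T = T_{μ_1} + ⋯ + T_{μ_n} satisfies ‖T‖² = ‖T_{μ_1}^*T_{μ_1} + ⋯ + T_{μ_n}^*T_{μ_n}‖ = n. -/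
open ContinuousLinearMap

noncomputable section

variable {d : ℕ} {H : Type*} [NormedAddCommGroup H] [InnerProductSpace ℂ H] [CompleteSpace H]

set_option linter.unusedSectionVars false

lemma hb_op_ext {ι : Type*} (e : HilbertBasis ι ℂ H) {f g : H →L[ℂ] H}
    (h : ∀ i, f (e i) = g (e i)) : f = g := by
  have hd : Dense (Submodule.span ℂ (Set.range (e : ι → H)) : Set H) :=
    Submodule.dense_iff_topologicalClosure_eq_top.2 e.dense_span
  have heq : Set.EqOn f g (Submodule.span ℂ (Set.range (e : ι → H)) : Set H) :=
    LinearMap.eqOn_span' (by rintro x ⟨i, rfl⟩; exact h i)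
  exact ContinuousLinearMap.coeFn_injective
    (Continuous.ext_on hd f.continuous g.continuous heq)

lemma hb_vec_ext {ι : Type*} (e : HilbertBasis ι ℂ H) {x y : H}
    (h : ∀ i, (inner ℂ (e i) x : ℂ) = inner ℂ (e i) y) : x = y := by
  apply e.repr.injective
  apply lp.ext
  funext i
  rw [e.repr_apply_apply, e.repr_apply_apply]
  exact h i

variable {Λ : Set (List (Fin d))} {T : Fin d → H →L[ℂ] H}

lemma Tw_apply_mem (hΛ : IsFactorialLang Λ) (e : HilbertBasis {ν : List (Fin d) // ν ∈ Λ} ℂ H)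
    (hT : IsShift Λ e T) (μ : List (Fin d)) (ν : {ν : List (Fin d) // ν ∈ Λ})
    (h : μ ++ ν.1 ∈ Λ) : Tw T μ (e ν) = e ⟨μ ++ ν.1, h⟩ := by
  induction μ with
  | nil =>
    show e ν = e ⟨[] ++ ν.1, h⟩
    exact congrArg e (Subtype.ext rfl)
  | cons i μ ih =>
    have hμν : μ ++ ν.1 ∈ Λ := hΛ.2 [i] (μ ++ ν.1) [] (by simpa using h)
    have : Tw T (i :: μ) (e ν) = T i (Tw T μ (e ν)) := rfl
    rw [this, ih hμν]
    exact (hT i ⟨μ ++ ν.1, hμν⟩).1 h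

lemma Tw_apply_not_mem (hΛ : IsFactorialLang Λ)
    (e : HilbertBasis {ν : List (Fin d) // ν ∈ Λ} ℂ H) (hT : IsShift Λ e T) (μ : List (Fin d)) (ν : {ν : List (Fin d) // ν ∈ Λ})
    (h : μ ++ ν.1 ∉ Λ) : Tw T μ (e ν) = 0 := by
  induction μ with
  | nil => exact absurd ν.2 (by simpa using h)
  | cons i μ ih =>
    have : Tw T (i :: μ) (e ν) = T i (Tw T μ (e ν)) := rfl
    rw [this]
    by_cases hμν : μ ++ ν.1 ∈ Λ
    · rw [Tw_apply_mem hΛ e hT μ ν hμν]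
      exact (hT i ⟨μ ++ ν.1, hμν⟩).2 h
    · rw [ih hμν, map_zero]

/-- `T_μ^* T_ν = 0` for distinct words of equal length. -/
lemma adj_Tw_mul_Tw_eq_zero (hΛ : IsFactorialLang Λ)
    (e : HilbertBasis {ν : List (Fin d) // ν ∈ Λ} ℂ H) (hT : IsShift Λ e T) {μ ν : List (Fin d)} (hne : μ ≠ ν)
    (hlen : μ.length = ν.length) : adjoint (Tw T μ) * Tw T ν = 0 := by
  classical
  apply hb_op_ext e
  intro α
  rw [ContinuousLinearMap.mul_apply, zero_apply]
  apply hb_vec_ext e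
  intro κ
  rw [inner_zero_right, adjoint_inner_right]
  by_cases hνα : ν ++ α.1 ∈ Λ
  · rw [Tw_apply_mem hΛ e hT ν α hνα]
    by_cases hμκ : μ ++ κ.1 ∈ Λ
    · rw [Tw_apply_mem hΛ e hT μ κ hμκ]
      rw [orthonormal_iff_ite.mp e.orthonormal]
      rw [if_neg]
      intro hc
      have : μ ++ κ.1 = ν ++ α.1 := congrArg Subtype.val hc
      exact hne (List.append_inj this hlen).1
    · rw [Tw_apply_not_mem hΛ e hT μ κ hμκ, inner_zero_left]
  · rw [Tw_apply_not_mem hΛ e hT ν α hνα, inner_zero_right]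

open scoped Classical in
lemma adj_Tw_mul_Tw_apply (hΛ : IsFactorialLang Λ)
    (e : HilbertBasis {ν : List (Fin d) // ν ∈ Λ} ℂ H) (hT : IsShift Λ e T) (μ : List (Fin d)) (α : {ν : List (Fin d) // ν ∈ Λ}) :
    (adjoint (Tw T μ) * Tw T μ) (e α) = if μ ++ α.1 ∈ Λ then e α else 0 := by
  classical
  rw [ContinuousLinearMap.mul_apply]
  by_cases hμα : μ ++ α.1 ∈ Λ
  · rw [if_pos hμα, Tw_apply_mem hΛ e hT μ α hμα]
    apply hb_vec_ext e
    intro κ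
    rw [adjoint_inner_right]
    by_cases hμκ : μ ++ κ.1 ∈ Λ
    · rw [Tw_apply_mem hΛ e hT μ κ hμκ]
      rw [orthonormal_iff_ite.mp e.orthonormal, orthonormal_iff_ite.mp e.orthonormal]
      congr 1
      simp only [eq_iff_iff]
      constructor
      · intro hc
        have : μ ++ κ.1 = μ ++ α.1 := congrArg Subtype.val hc
        exact Subtype.ext ((List.append_cancel_left this))
      · rintro rfl; rfl
    · rw [Tw_apply_not_mem hΛ e hT μ κ hμκ, inner_zero_left]
      rw [orthonormal_iff_ite.mp e.orthonormal, if_neg]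
      rintro rfl
      exact hμκ hμα
  · rw [if_neg hμα, Tw_apply_not_mem hΛ e hT μ α hμα, map_zero]

lemma norm_adj_Tw_mul_Tw_le (hΛ : IsFactorialLang Λ)
    (e : HilbertBasis {ν : List (Fin d) // ν ∈ Λ} ℂ H) (hT : IsShift Λ e T) (μ : List (Fin d)) :
    ‖adjoint (Tw T μ) * Tw T μ‖ ≤ 1 := by
  classical
  set A := adjoint (Tw T μ) * Tw T μ with hA
  have hsq : A * A = A := by
    apply hb_op_ext e
    intro α
    rw [ContinuousLinearMap.mul_apply, hA, adj_Tw_mul_Tw_apply hΛ e hT]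
    by_cases h : μ ++ α.1 ∈ Λ
    · rw [if_pos h, adj_Tw_mul_Tw_apply hΛ e hT, if_pos h]
    · rw [if_neg h, map_zero]
  have hsa : adjoint A = A := by
    rw [hA, ← star_eq_adjoint, ← star_eq_adjoint, star_mul, star_star, star_eq_adjoint]
  have hkey : ‖A‖ * ‖A‖ = ‖A‖ := by
    calc ‖A‖ * ‖A‖ = ‖adjoint A ∘L A‖ := (norm_adjoint_comp_self A).symm
    _ = ‖A * A‖ := by rw [hsa]; rfl
    _ = ‖A‖ := by rw [hsq]
  nlinarith [norm_nonneg A]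

/-- If `μ_1, …, μ_n` (`n ≥ 1`) are distinct words in `Λ*` of the same length whose
projections multiply to `P_∅`, then `T = T_{μ_1} + ⋯ + T_{μ_n}` satisfies
`‖T‖² = ‖T_{μ_1}^*T_{μ_1} + ⋯ + T_{μ_n}^*T_{μ_n}‖ = n`. -/
theorem stmt10 (Λ : Set (List (Fin d))) (hΛ : IsFactorialLang Λ)
    (e : HilbertBasis {ν : List (Fin d) // ν ∈ Λ} ℂ H)
    (T : Fin d → H →L[ℂ] H) (hT : IsShift Λ e T)
    (n : ℕ) (hn : 1 ≤ n) (μ : Fin n → List (Fin d))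
    (hμΛ : ∀ i, μ i ∈ Λ) (hdist : Function.Injective μ)
    (hlen : ∀ i j, (μ i).length = (μ j).length)
    (hprod : (List.ofFn fun i => adjoint (Tw T (μ i)) * Tw T (μ i)).prod =
      (innerSL ℂ (e ⟨[], hΛ.1⟩)).smulRight (e ⟨[], hΛ.1⟩)) :
    ‖∑ i, Tw T (μ i)‖ ^ 2 = ‖∑ i, adjoint (Tw T (μ i)) * Tw T (μ i)‖ ∧
    ‖∑ i, Tw T (μ i)‖ ^ 2 = (n : ℝ) := by
  classical
  set S : H →L[ℂ] H := ∑ i, Tw T (μ i) with hS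
  set A : H →L[ℂ] H := ∑ i, adjoint (Tw T (μ i)) * Tw T (μ i) with hAdef
  have hSS : adjoint S * S = A := by
    rw [hS, map_sum, Finset.sum_mul_sum]
    rw [hAdef]
    apply Finset.sum_congr rfl
    intro i _
    refine Finset.sum_eq_single_of_mem i (Finset.mem_univ i) ?_
    intro j _ hji
    exact adj_Tw_mul_Tw_eq_zero hΛ e hT (fun hc => hji (hdist hc).symm) (hlen _ _)
  have h1 : ‖S‖ ^ 2 = ‖A‖ := by
    rw [sq, ← hSS]
    exact (norm_adjoint_comp_self S).symm
  refine ⟨h1, h1.trans ?_⟩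
  -- upper bound
  have hub : ‖A‖ ≤ n := by
    calc ‖A‖ ≤ ∑ i : Fin n, ‖adjoint (Tw T (μ i)) * Tw T (μ i)‖ := norm_sum_le _ _
    _ ≤ ∑ _i : Fin n, (1 : ℝ) := by
        exact Finset.sum_le_sum fun i _ => norm_adj_Tw_mul_Tw_le hΛ e hT (μ i)
    _ = n := by simp
  -- lower bound
  have hx : ‖e (⟨[], hΛ.1⟩ : {ν : List (Fin d) // ν ∈ Λ})‖ = 1 :=
    e.orthonormal.1 _
  have hAx : A (e ⟨[], hΛ.1⟩) = (n : ℂ) • e ⟨[], hΛ.1⟩ := by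
    rw [hAdef, ContinuousLinearMap.sum_apply]
    have : ∀ i : Fin n, (adjoint (Tw T (μ i)) * Tw T (μ i)) (e ⟨[], hΛ.1⟩)
        = e ⟨[], hΛ.1⟩ := by
      intro i
      rw [adj_Tw_mul_Tw_apply hΛ e hT, if_pos (by simpa using hμΛ i)]
    rw [Finset.sum_congr rfl fun i _ => this i]
    rw [Finset.sum_const, Finset.card_univ, Fintype.card_fin]
    exact (Nat.cast_smul_eq_nsmul ℂ n _).symm
  have hlb : (n : ℝ) ≤ ‖A‖ := by
    have h2 : ‖A (e ⟨[], hΛ.1⟩)‖ = n := by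
      rw [hAx, norm_smul, hx]
      simp
    calc (n : ℝ) = ‖A (e ⟨[], hΛ.1⟩)‖ := h2.symm
    _ ≤ ‖A‖ * ‖e (⟨[], hΛ.1⟩ : {ν : List (Fin d) // ν ∈ Λ})‖ := le_opNorm A _
    _ = ‖A‖ := by rw [hx, mul_one]
  linarith
end
end

section
/- Let X be a locally compact Hausdorff space, x ∈ X, and let D : C_0(X; ℂ) → ℂ be a linear map satisfying D(fg) = f(x)D(g) + D(f)g(x) for all f, g ∈ C_0(X) (a point derivation at x, not assumed continuous). Then D = 0. -/
open scoped ZeroAtInfty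
open Filter Topology Set

noncomputable def sq1 : ℂ → ℂ := fun z => if z = 0 then 0 else z / (Real.sqrt (‖z‖) : ℂ)

noncomputable def sq2 : ℂ → ℂ := fun z => (Real.sqrt (‖z‖) : ℂ)

lemma sq1_zero : sq1 0 = 0 := by simp [sq1]

lemma sq2_zero : sq2 0 = 0 := by simp [sq2]

lemma sq1_mul_sq2 (z : ℂ) : sq1 z * sq2 z = z := by
  by_cases hz : z = 0
  · simp [hz, sq1_zero, sq2_zero]
  · have habs : ‖z‖ ≠ 0 := by simpa using hz
    have hpos : (0 : ℝ) < Real.sqrt (‖z‖) :=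
      Real.sqrt_pos.mpr (lt_of_le_of_ne (norm_nonneg z) (Ne.symm habs))
    have : (Real.sqrt (‖z‖) : ℂ) ≠ 0 := by
      exact_mod_cast hpos.ne'
    simp [sq1, sq2, hz, div_mul_cancel₀ _ this]

lemma norm_sq1 (z : ℂ) : ‖sq1 z‖ ≤ Real.sqrt (‖z‖) := by
  by_cases hz : z = 0
  · simp [hz, sq1_zero]
  · have habs : (0 : ℝ) < ‖z‖ := by
      simpa [norm_pos_iff] using hz
    have hpos : (0 : ℝ) < Real.sqrt (‖z‖) := Real.sqrt_pos.mpr habs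
    have : ‖sq1 z‖ = ‖z‖ / Real.sqrt (‖z‖) := by
      simp [sq1, hz, Complex.norm_real, abs_of_pos hpos,
        map_div₀]
    rw [this, div_le_iff₀ hpos, Real.mul_self_sqrt habs.le]

lemma continuous_sq2 : Continuous sq2 :=
  Complex.continuous_ofReal.comp (Real.continuous_sqrt.comp continuous_norm)

lemma continuous_sq1 : Continuous sq1 := by
  rw [continuous_iff_continuousAt]
  intro z
  by_cases hz : z = 0
  · subst hz
    rw [ContinuousAt, sq1_zero]
    apply squeeze_zero_norm norm_sq1
    have : Continuous fun w : ℂ => Real.sqrt (‖w‖) :=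
      Real.continuous_sqrt.comp continuous_norm
    simpa using this.tendsto 0
  · have habs : (0 : ℝ) < ‖z‖ := by
      simpa [norm_pos_iff] using hz
    have hne : (Real.sqrt (‖z‖) : ℂ) ≠ 0 := by
      exact_mod_cast (Real.sqrt_pos.mpr habs).ne'
    have hca : ContinuousAt (fun w : ℂ => w / (Real.sqrt (‖w‖) : ℂ)) z :=
      continuousAt_id.div (continuous_sq2.continuousAt) hne
    refine hca.congr ?_
    filter_upwards [isOpen_compl_singleton.mem_nhds hz] with w hw
    simp [sq1, Set.mem_compl_iff, Set.mem_singleton_iff] at hw ⊢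

/-- A (not necessarily continuous) point derivation at a point `x` of a locally compact
Hausdorff space `X` on `C₀(X, ℂ)` is zero. -/
theorem stmt13 {X : Type*} [TopologicalSpace X] [LocallyCompactSpace X] [T2Space X]
    (x : X) (D : C₀(X, ℂ) →ₗ[ℂ] ℂ)
    (hD : ∀ f g : C₀(X, ℂ), D (f * g) = f x * D g + D f * g x) :
    D = 0 := by
  -- Step 1: D vanishes on functions vanishing at x
  have key : ∀ f : C₀(X, ℂ), f x = 0 → D f = 0 := by
    intro f hf
    let g1 : C₀(X, ℂ) :=
      ⟨⟨fun y => sq1 (f y), continuous_sq1.comp f.continuous⟩, by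
        have h0 : Filter.Tendsto sq1 (𝓝 0) (𝓝 0) := by
          simpa [sq1_zero] using continuous_sq1.tendsto 0
        exact h0.comp (zero_at_infty f)⟩
    let g2 : C₀(X, ℂ) :=
      ⟨⟨fun y => sq2 (f y), continuous_sq2.comp f.continuous⟩, by
        have h0 : Filter.Tendsto sq2 (𝓝 0) (𝓝 0) := by
          simpa [sq2_zero] using continuous_sq2.tendsto 0
        exact h0.comp (zero_at_infty f)⟩
    have hfact : f = g1 * g2 := by
      ext y
      exact (sq1_mul_sq2 (f y)).symm
    have h1 : g1 x = 0 := by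
      show sq1 (f x) = 0
      rw [hf, sq1_zero]
    have h2 : g2 x = 0 := by
      show sq2 (f x) = 0
      rw [hf, sq2_zero]
    rw [hfact, hD, h1, h2]
    ring
  -- Step 2: get a compactly supported bump equal to 1 at x
  obtain ⟨b, hb1, -, hbcs, -⟩ :=
    exists_continuous_one_zero_of_isCompact (isCompact_singleton : IsCompact {x})
      isClosed_empty (Set.disjoint_empty _)
  have hbcs' : HasCompactSupport (fun y => (b y : ℂ)) :=
    hbcs.comp_left (g := Complex.ofReal) (by simp)
  let e : C₀(X, ℂ) :=
    ⟨⟨fun y => (b y : ℂ), Complex.continuous_ofReal.comp b.continuous⟩,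
      hbcs'.is_zero_at_infty⟩
  have he : e x = 1 := by
    show ((b x : ℂ)) = 1
    have : b x = 1 := hb1 (Set.mem_singleton x)
    simp [this]
  -- Step 3: D e = 0
  have hee : (e * e - e) x = 0 := by
    simp [he]
  have hDee : D (e * e - e) = 0 := key _ hee
  have hDe : D e = 0 := by
    have h1 : D (e * e) = D e + D e := by
      rw [hD e e, he]; ring
    have h2 : D (e * e) - D e = 0 := by
      rw [← map_sub]; exact hDee
    have h3 := h2
    rw [h1] at h3
    linear_combination h3
  -- Step 4: conclude
  ext f
  have hvan : (f - f x • e) x = 0 := by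
    simp [he]
  have := key _ hvan
  rw [map_sub, map_smul] at this
  simp only [LinearMap.zero_apply]
  rw [hDe] at this
  simpa using this
end

section
/- (Sinclair stability lemma) Let φ : A → B be a surjective algebra homomorphism between Banach algebras, and let S(φ) = {b ∈ B : ∃ (a_n) in A with a_n → 0 and φ(a_n) → b} be its separating space. Then for every sequence (b_n) in B there exists N ∈ ℕ such that the closure of b_1 b_2 ⋯ b_n S(φ) equals the closure of b_1 b_2 ⋯ b_N S(φ) for all n ≥ N, and likewise the closure of S(φ) b_n b_{n−1} ⋯ b_1 equals the closure of S(φ) b_N b_{N−1} ⋯ b_1 for all n ≥ N. -/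
open Filter Metric

set_option maxHeartbeats 2000000
set_option synthInstance.maxHeartbeats 1000000

namespace Stmt15Aux

variable {E : Type*} [NormedAddCommGroup E] [NormedSpace ℂ E]

lemma infDist_tri (G : Submodule ℂ E) (x y : E) :
    infDist x (G : Set E) ≤ infDist (x + y) (G : Set E) + infDist y (G : Set E) := by
  have hne : (G : Set E).Nonempty := ⟨0, G.zero_mem⟩
  refine le_of_forall_pos_le_add fun ε hε => ?_
  have h2 : 0 < ε / 2 := by linarith
  obtain ⟨g, hg, hgd⟩ := (infDist_lt_iff hne).1
    (show infDist (x + y) (G : Set E) < infDist (x + y) (G : Set E) + ε / 2 by linarith)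
  obtain ⟨g', hg', hgd'⟩ := (infDist_lt_iff hne).1
    (show infDist y (G : Set E) < infDist y (G : Set E) + ε / 2 by linarith)
  have hm : g - g' ∈ (G : Set E) := G.sub_mem hg hg'
  have hd : dist x (g - g') ≤ dist (x + y) g + dist y g' := by
    rw [dist_eq_norm, dist_eq_norm, dist_eq_norm]
    have hxg : x - (g - g') = (x + y - g) - (y - g') := by abel
    rw [hxg]
    exact norm_sub_le _ _
  have := infDist_le_dist_of_mem (x := x) hm
  linarith

lemma infDist_smul_le (G : Submodule ℂ E) (t : ℂ) (x : E) :
    infDist (t • x) (G : Set E) ≤ ‖t‖ * infDist x (G : Set E) := by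
  have hne : (G : Set E).Nonempty := ⟨0, G.zero_mem⟩
  refine le_of_forall_pos_le_add fun ε hε => ?_
  have hδ : 0 < ε / (1 + ‖t‖) := by positivity
  obtain ⟨g, hg, hgd⟩ := (infDist_lt_iff hne).1
    (show infDist x (G : Set E) < infDist x (G : Set E) + ε / (1 + ‖t‖) by linarith)
  have hm : t • g ∈ (G : Set E) := G.smul_mem t hg
  have h1 : infDist (t • x) (G : Set E) ≤ dist (t • x) (t • g) := infDist_le_dist_of_mem hm
  have h2 : dist (t • x) (t • g) = ‖t‖ * dist x g := by
    rw [dist_eq_norm, dist_eq_norm, ← smul_sub, norm_smul]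
  have h3 : ‖t‖ * dist x g ≤ ‖t‖ * (infDist x (G : Set E) + ε / (1 + ‖t‖)) :=
    mul_le_mul_of_nonneg_left (by linarith) (norm_nonneg t)
  have h4 : ‖t‖ * (ε / (1 + ‖t‖)) ≤ ε := by
    rw [mul_div_assoc']
    rw [div_le_iff₀ (by positivity : (0:ℝ) < 1 + ‖t‖)]
    nlinarith [norm_nonneg t]
  nlinarith [norm_nonneg t]

lemma sep_char {A B : Type*} [NormedRing A] [NormedAlgebra ℂ A]
    [NormedRing B] [NormedAlgebra ℂ B] (φ : A →ₐ[ℂ] B) (x : B) :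
    (∃ a : ℕ → A, Tendsto a atTop (nhds 0) ∧ Tendsto (fun n => φ (a n)) atTop (nhds x)) ↔
      ∀ ε > 0, ∃ a : A, ‖a‖ < ε ∧ ‖φ a - x‖ < ε := by
  constructor
  · rintro ⟨a, h0, hb⟩ ε hε
    rw [Metric.tendsto_atTop] at h0 hb
    obtain ⟨N1, h1⟩ := h0 ε hε
    obtain ⟨N2, h2⟩ := hb ε hε
    refine ⟨a (max N1 N2), ?_, ?_⟩
    · have := h1 _ (le_max_left N1 N2); rwa [dist_zero_right] at this
    · have := h2 _ (le_max_right N1 N2); rwa [dist_eq_norm] at this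
  · intro h
    choose f hf1 hf2 using fun n : ℕ => h (1 / ((n : ℝ) + 1)) (by positivity)
    have hle : ∀ {ε : ℝ}, 0 < ε → ∃ N : ℕ, ∀ n ≥ N, 1 / ((n : ℝ) + 1) < ε := by
      intro ε hε
      obtain ⟨N, hN⟩ := exists_nat_one_div_lt hε
      refine ⟨N, fun n hn => lt_of_le_of_lt ?_ hN⟩
      apply one_div_le_one_div_of_le (by positivity)
      have : (N : ℝ) ≤ n := Nat.cast_le.2 hn
      linarith
    refine ⟨f, ?_, ?_⟩
    · rw [Metric.tendsto_atTop]
      intro ε hε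
      obtain ⟨N, hN⟩ := hle hε
      exact ⟨N, fun n hn => by rw [dist_zero_right]; exact (hf1 n).trans (hN n hn)⟩
    · rw [Metric.tendsto_atTop]
      intro ε hε
      obtain ⟨N, hN⟩ := hle hε
      exact ⟨N, fun n hn => by rw [dist_eq_norm]; exact (hf2 n).trans (hN n hn)⟩



set_option maxHeartbeats 1000000
set_option synthInstance.maxHeartbeats 400000


lemma k1 {A B : Type*} [NormedRing A] [NormedAlgebra ℂ A] [CompleteSpace A]
    [NormedRing B] [NormedAlgebra ℂ B] [CompleteSpace B]
    (φ : A →ₐ[ℂ] B) (𝔖 : Submodule ℂ B)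
    (hchar : ∀ x : B, x ∈ 𝔖 ↔ ∀ ε > 0, ∃ a : A, ‖a‖ < ε ∧ ‖φ a - x‖ < ε)
    (hclosed : IsClosed (𝔖 : Set B)) :
    ∃ C₀ : ℝ, 0 ≤ C₀ ∧ ∀ v : A, infDist (φ v) (𝔖 : Set B) ≤ C₀ * ‖v‖ := by
  haveI : IsClosed (𝔖 : Set B) := hclosed
  let ψ : A →ₗ[ℂ] B ⧸ 𝔖 := 𝔖.mkQ.comp φ.toLinearMap
  have hψ : ∀ v : A, ψ v = Submodule.Quotient.mk (φ v) := fun v => rfl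
  have hcont : Continuous ψ := by
    apply LinearMap.continuous_of_isClosed_graph
    apply IsSeqClosed.isClosed
    intro p q hp hq
    rw [SetLike.mem_coe, LinearMap.mem_graph_iff]
    have hp' : ∀ n, (p n).2 = ψ (p n).1 := fun n => (LinearMap.mem_graph_iff ψ (p n)).1 (hp n)
    have hu : Tendsto (fun n => (p n).1) atTop (nhds q.1) :=
      (continuous_fst.tendsto q).comp hq
    have hv : Tendsto (fun n => ψ (p n).1) atTop (nhds q.2) := by
      have := (continuous_snd.tendsto q).comp hq
      simpa only [Function.comp_def, hp'] using this
    -- reduce to sequences tending to zero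
    set w : ℕ → A := fun n => (p n).1 - q.1 with hw
    have hw0 : Tendsto w atTop (nhds 0) := by
      simpa using hu.sub (tendsto_const_nhds (x := q.1))
    set z : B ⧸ 𝔖 := q.2 - ψ q.1 with hz
    have hwz : Tendsto (fun n => ψ (w n)) atTop (nhds z) := by
      have : ∀ n, ψ (w n) = ψ (p n).1 - ψ q.1 := fun n => by rw [hw]; exact map_sub ψ _ _
      simp only [this]
      exact hv.sub tendsto_const_nhds
    suffices hz0 : z = 0 by
      rw [hz] at hz0
      exact sub_eq_zero.mp hz0
    obtain ⟨y₀, hy₀⟩ := Submodule.Quotient.mk_surjective 𝔖 z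
    have hnorm0 : Tendsto (fun n => ‖(Submodule.Quotient.mk (φ (w n) - y₀) : B ⧸ 𝔖)‖)
        atTop (nhds 0) := by
      have h1 : Tendsto (fun n => ψ (w n) - z) atTop (nhds 0) := by
        simpa using hwz.sub (tendsto_const_nhds (x := z))
      have h2 : ∀ n, ψ (w n) - z = Submodule.Quotient.mk (φ (w n) - y₀) := by
        intro n
        rw [hψ, ← hy₀, ← Submodule.Quotient.mk_sub]
      rw [tendsto_zero_iff_norm_tendsto_zero] at h1
      simpa only [h2] using h1
    -- choose good representatives
    have hrep : ∀ n : ℕ, ∃ m : B, Submodule.Quotient.mk m =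
        (Submodule.Quotient.mk (φ (w n) - y₀) : B ⧸ 𝔖) ∧
        ‖m‖ < ‖(Submodule.Quotient.mk (φ (w n) - y₀) : B ⧸ 𝔖)‖ + 1 / ((n : ℝ) + 1) := by
      intro n
      exact Submodule.Quotient.norm_mk_lt _ (by positivity)
    choose m hm1 hm2 using hrep
    have hsmem : ∀ n, φ (w n) - y₀ - m n ∈ 𝔖 := by
      intro n
      have := (Submodule.Quotient.eq 𝔖).1 (hm1 n)
      simpa using 𝔖.neg_mem this
    have hmnorm : Tendsto (fun n => ‖m n‖) atTop (nhds 0) := by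
      apply squeeze_zero (fun n => norm_nonneg _) (fun n => (hm2 n).le)
      have h2 : Tendsto (fun n : ℕ => 1 / ((n : ℝ) + 1)) atTop (nhds 0) :=
        tendsto_one_div_add_atTop_nhds_zero_nat
      simpa using hnorm0.add h2
    have hwnorm : Tendsto (fun n => ‖w n‖) atTop (nhds 0) := by
      rwa [tendsto_zero_iff_norm_tendsto_zero] at hw0
    have hy₀mem : y₀ ∈ 𝔖 := by
      rw [hchar]
      intro ε hε
      have hev : ∀ᶠ n in atTop, ‖w n‖ < ε / 2 ∧ ‖m n‖ < ε / 4 :=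
        (hwnorm.eventually_lt_const (by linarith)).and
          (hmnorm.eventually_lt_const (by linarith))
      obtain ⟨j, hj1, hj2⟩ := hev.exists
      obtain ⟨a', ha1, ha2⟩ := (hchar _).1 (hsmem j) (min (ε / 2) (ε / 4)) (by positivity)
      refine ⟨w j - a', ?_, ?_⟩
      · have : ‖w j - a'‖ ≤ ‖w j‖ + ‖a'‖ := norm_sub_le _ _
        have ha1' : ‖a'‖ < ε / 2 := lt_of_lt_of_le ha1 (min_le_left _ _)
        linarith
      · have hid : φ (w j - a') - y₀ = m j + ((φ (w j) - y₀ - m j) - φ a') := by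
          rw [map_sub]; abel
        rw [hid]
        have h1 : ‖(φ (w j) - y₀ - m j) - φ a'‖ = ‖φ a' - (φ (w j) - y₀ - m j)‖ :=
          norm_sub_rev _ _
        have ha2' : ‖φ a' - (φ (w j) - y₀ - m j)‖ < ε / 4 := lt_of_lt_of_le ha2 (min_le_right _ _)
        calc ‖m j + ((φ (w j) - y₀ - m j) - φ a')‖
            ≤ ‖m j‖ + ‖(φ (w j) - y₀ - m j) - φ a'‖ := norm_add_le _ _
          _ < ε / 4 + ε / 4 := by rw [h1]; exact add_lt_add hj2 ha2'
          _ ≤ ε := by linarith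
    rw [← hy₀]
    exact (Submodule.Quotient.mk_eq_zero 𝔖).2 hy₀mem
  -- extract the bound
  let L : A →L[ℂ] B ⧸ 𝔖 := ⟨ψ, hcont⟩
  refine ⟨‖L‖, ContinuousLinearMap.opNorm_nonneg L, fun v => ?_⟩
  refine le_of_forall_pos_le_add fun ε hε => ?_
  obtain ⟨m, hm1, hm2⟩ :=
    Submodule.Quotient.norm_mk_lt (Submodule.Quotient.mk (φ v) : B ⧸ 𝔖) hε
  have hmem : m - φ v ∈ 𝔖 := by
    have := (Submodule.Quotient.eq 𝔖).1 hm1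
    simpa using this
  have hsm : φ v - m ∈ (𝔖 : Set B) := by
    have := 𝔖.neg_mem hmem
    simpa [neg_sub] using this
  have h1 : infDist (φ v) (𝔖 : Set B) ≤ dist (φ v) (φ v - m) := infDist_le_dist_of_mem hsm
  have h2 : dist (φ v) (φ v - m) = ‖m‖ := by
    rw [dist_eq_norm]; congr 1; abel
  have h3 : ‖(Submodule.Quotient.mk (φ v) : B ⧸ 𝔖)‖ = ‖L v‖ := rfl
  have h4 : ‖L v‖ ≤ ‖L‖ * ‖v‖ := L.le_opNorm v
  rw [h2] at h1
  rw [h3] at hm2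
  linarith




theorem key {A B : Type*} [NormedRing A] [NormedAlgebra ℂ A] [CompleteSpace A]
    [NormedRing B] [NormedAlgebra ℂ B] [CompleteSpace B]
    (φ : A →ₐ[ℂ] B) (hφ : Function.Surjective φ)
    (S : Set B)
    (hS : S = {b : B | ∃ a : ℕ → A, Tendsto a atTop (nhds 0) ∧
      Tendsto (fun n => φ (a n)) atTop (nhds b)})
    (b : ℕ → B) :
    ∃ N : ℕ, ∀ n ≥ N,
      closure ((fun s => ((List.range n).map b).prod * s) '' S) =
        closure ((fun s => ((List.range N).map b).prod * s) '' S) := by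
  have hchar : ∀ x : B, x ∈ S ↔ ∀ ε > 0, ∃ a : A, ‖a‖ < ε ∧ ‖φ a - x‖ < ε := by
    intro x; rw [hS]; exact sep_char φ x
  -- basic closure properties of S
  have h0S : (0 : B) ∈ S := (hchar 0).2 fun ε hε => ⟨0, by simpa using hε, by simpa using hε⟩
  have haddS : ∀ {s u : B}, s ∈ S → u ∈ S → s + u ∈ S := by
    intro s u hs hu
    rw [hchar] at hs hu ⊢
    intro ε hε
    obtain ⟨a1, ha11, ha12⟩ := hs (ε / 2) (by linarith)
    obtain ⟨a2, ha21, ha22⟩ := hu (ε / 2) (by linarith)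
    refine ⟨a1 + a2, ?_, ?_⟩
    · calc ‖a1 + a2‖ ≤ ‖a1‖ + ‖a2‖ := norm_add_le _ _
        _ < ε := by linarith
    · have : φ (a1 + a2) - (s + u) = (φ a1 - s) + (φ a2 - u) := by rw [map_add]; abel
      rw [this]
      calc ‖(φ a1 - s) + (φ a2 - u)‖ ≤ ‖φ a1 - s‖ + ‖φ a2 - u‖ := norm_add_le _ _
        _ < ε := by linarith
  have hsmulS : ∀ (t : ℂ) {s : B}, s ∈ S → t • s ∈ S := by
    intro t s hs
    rw [hchar] at hs ⊢
    intro ε hε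
    have hδ : 0 < ε / (1 + ‖t‖) := by positivity
    obtain ⟨a1, ha1, ha2⟩ := hs _ hδ
    have hkey : ∀ y : B, ‖y‖ < ε / (1 + ‖t‖) → ‖t • y‖ < ε := by
      intro y hy
      rw [norm_smul]
      calc ‖t‖ * ‖y‖ ≤ (1 + ‖t‖) * ‖y‖ :=
            mul_le_mul_of_nonneg_right (by linarith [norm_nonneg t]) (norm_nonneg y)
        _ < (1 + ‖t‖) * (ε / (1 + ‖t‖)) := by
            apply mul_lt_mul_of_pos_left hy (by positivity)
        _ = ε := by field_simp
    refine ⟨t • a1, ?_, ?_⟩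
    · have := hkey (φ a1 - s) ha2  -- dummy to keep structure
      have h' : ‖(t : ℂ) • a1‖ < ε := by
        rw [norm_smul]
        calc ‖t‖ * ‖a1‖ ≤ (1 + ‖t‖) * ‖a1‖ :=
              mul_le_mul_of_nonneg_right (by linarith [norm_nonneg t]) (norm_nonneg a1)
          _ < (1 + ‖t‖) * (ε / (1 + ‖t‖)) := by
              apply mul_lt_mul_of_pos_left ha1 (by positivity)
          _ = ε := by field_simp
      exact h'
    · have hmap : φ (t • a1) - t • s = t • (φ a1 - s) := by
        rw [map_smul, smul_sub]
      rw [hmap]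
      exact hkey _ ha2
  have hSclosed : IsClosed S := by
    rw [← closure_subset_iff_isClosed]
    intro x hx
    rw [hchar]
    intro ε hε
    obtain ⟨s, hsS, hsd⟩ := Metric.mem_closure_iff.1 hx (ε / 2) (by linarith)
    obtain ⟨a1, ha1, ha2⟩ := (hchar s).1 hsS (ε / 2) (by linarith)
    refine ⟨a1, by linarith, ?_⟩
    calc ‖φ a1 - x‖ = ‖(φ a1 - s) + (s - x)‖ := by congr 1; abel
      _ ≤ ‖φ a1 - s‖ + ‖s - x‖ := norm_add_le _ _
      _ < ε / 2 + ε / 2 := by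
          have : ‖s - x‖ < ε / 2 := by rw [← dist_eq_norm']; exact hsd
          exact add_lt_add ha2 this
      _ = ε := by ring
  have hideal : ∀ (x : B) {s : B}, s ∈ S → x * s ∈ S := by
    intro x s hs
    obtain ⟨u, hu⟩ := hφ x
    rw [hchar] at hs ⊢
    intro ε hε
    have hδ : 0 < ε / (1 + ‖u‖ + ‖x‖) := by positivity
    obtain ⟨a1, ha1, ha2⟩ := hs _ hδ
    have hpos : (0:ℝ) < 1 + ‖u‖ + ‖x‖ := by positivity
    refine ⟨u * a1, ?_, ?_⟩
    · calc ‖u * a1‖ ≤ ‖u‖ * ‖a1‖ := norm_mul_le _ _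
        _ ≤ (1 + ‖u‖ + ‖x‖) * ‖a1‖ :=
            mul_le_mul_of_nonneg_right (by linarith [norm_nonneg u, norm_nonneg x]) (norm_nonneg _)
        _ < (1 + ‖u‖ + ‖x‖) * (ε / (1 + ‖u‖ + ‖x‖)) := mul_lt_mul_of_pos_left ha1 hpos
        _ = ε := by field_simp
    · have : φ (u * a1) - x * s = x * (φ a1 - s) := by
        rw [map_mul, hu, mul_sub]
      rw [this]
      calc ‖x * (φ a1 - s)‖ ≤ ‖x‖ * ‖φ a1 - s‖ := norm_mul_le _ _
        _ ≤ (1 + ‖u‖ + ‖x‖) * ‖φ a1 - s‖ :=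
            mul_le_mul_of_nonneg_right (by linarith [norm_nonneg u, norm_nonneg x]) (norm_nonneg _)
        _ < (1 + ‖u‖ + ‖x‖) * (ε / (1 + ‖u‖ + ‖x‖)) := mul_lt_mul_of_pos_left ha2 hpos
        _ = ε := by field_simp
  -- the submodule with carrier S
  let 𝔖 : Submodule ℂ B :=
    { carrier := S
      add_mem' := fun hs hu => haddS hs hu
      zero_mem' := h0S
      smul_mem' := fun t s hs => hsmulS t hs }
  obtain ⟨C₀, hC₀, hK1⟩ := k1 φ 𝔖 hchar hSclosed
  have hK1' : ∀ v : A, infDist (φ v) S ≤ C₀ * ‖v‖ := hK1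
  -- now argue by contradiction
  by_contra hcon
  push_neg at hcon
  set c : ℕ → B := fun n => ((List.range n).map b).prod with hc
  set G : ℕ → Set B := fun n => closure ((fun s => c n * s) '' S) with hG
  have hcon' : ∀ N : ℕ, ∃ n, N ≤ n ∧ G n ≠ G N := by
    intro N
    obtain ⟨n, hn1, hn2⟩ := hcon N
    exact ⟨n, hn1, hn2⟩
  -- G n as submodules
  let Wsub : ℕ → Submodule ℂ B :=
    fun n => (𝔖.map (LinearMap.mulLeft ℂ (c n))).topologicalClosure
  have hGW : ∀ n, G n = (Wsub n : Set B) := by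
    intro n
    have h1 : ⇑(LinearMap.mulLeft ℂ (c n)) = fun s : B => c n * s := by
      funext s; simp
    show closure ((fun s => c n * s) '' S) = _
    rw [Submodule.topologicalClosure_coe, Submodule.map_coe, h1]
    rfl
  have h0G : ∀ n, (0 : B) ∈ G n := by
    intro n
    apply subset_closure
    exact ⟨0, h0S, by simp⟩
  have hGclosed : ∀ n, IsClosed (G n) := fun n => isClosed_closure
  -- monotonicity
  have hcsucc : ∀ n, c (n + 1) = c n * b n := by
    intro n
    show ((List.range (n+1)).map b).prod = _
    rw [List.range_succ, List.map_append, List.prod_append]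
    simp
    rfl
  have hstep : ∀ n, G (n + 1) ⊆ G n := by
    intro n
    apply closure_minimal ?_ (hGclosed n)
    rintro _ ⟨s, hs, rfl⟩
    apply subset_closure
    refine ⟨b n * s, hideal (b n) hs, ?_⟩
    show c n * (b n * s) = c (n+1) * s
    rw [hcsucc n, mul_assoc]
  have hmono : ∀ {m n : ℕ}, m ≤ n → G n ⊆ G m := by
    intro m n h
    induction h with
    | refl => exact Set.Subset.rfl
    | step h ih => exact (hstep _).trans ih
  -- strictly decreasing subsequence
  let nseq : ℕ → ℕ := fun k => Nat.rec 0 (fun _ nk => (hcon' nk).choose) k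
  have hnsucc : ∀ k, nseq (k + 1) = (hcon' (nseq k)).choose := fun k => rfl
  have hnge : ∀ k, nseq k ≤ nseq (k + 1) := fun k => ((hcon' (nseq k)).choose_spec).1
  have hnne : ∀ k, G (nseq (k + 1)) ≠ G (nseq k) := fun k => ((hcon' (nseq k)).choose_spec).2
  have hnmono : Monotone nseq := monotone_nat_of_le_succ hnge
  -- preimages of the b i
  choose a ha using fun i => hφ (b i)
  let e : ℕ → A := fun m => ((List.range m).map a).prod
  have hφe : ∀ m, φ (e m) = c m := by
    intro m
    show φ (((List.range m).map a).prod) = ((List.range m).map b).prod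
    rw [map_list_prod, List.map_map]
    congr 1
    apply List.map_congr_left
    intro i _
    exact ha i
  let r : ℕ → ℕ → A := fun i j =>
    ((List.range (nseq j - nseq i)).map (fun t => a (nseq i + t))).prod
  have hsplit : ∀ i j, i ≤ j → e (nseq j) = e (nseq i) * r i j := by
    intro i j hij
    have h1 : nseq i + (nseq j - nseq i) = nseq j := Nat.add_sub_cancel' (hnmono hij)
    show ((List.range (nseq j)).map a).prod = _
    rw [← h1, List.range_add, List.map_append, List.prod_append, List.map_map]
    rfl
  have he0 : ∀ j, e (nseq j) = r 0 j := by
    intro j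
    have h := hsplit 0 j (Nat.zero_le j)
    have h0 : e (nseq 0) = 1 := by
      show ((List.range 0).map a).prod = 1
      simp
    rw [h, h0, one_mul]
  -- norm bounds for the partial products
  let Cb : ℕ → ℝ := fun j => 1 + ∑ i ∈ Finset.range (j + 1), ‖r i j‖
  have hCb_pos : ∀ j, 0 < Cb j := by
    intro j
    have : 0 ≤ ∑ i ∈ Finset.range (j + 1), ‖r i j‖ :=
      Finset.sum_nonneg fun i _ => norm_nonneg _
    show 0 < 1 + ∑ i ∈ Finset.range (j + 1), ‖r i j‖
    linarith
  have hr_le : ∀ i j, i ≤ j → ‖r i j‖ ≤ Cb j := by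
    intro i j hij
    have h1 : ‖r i j‖ ≤ ∑ i' ∈ Finset.range (j + 1), ‖r i' j‖ :=
      Finset.single_le_sum (f := fun i' => ‖r i' j‖) (fun i' _ => norm_nonneg _)
        (Finset.mem_range.2 (by omega : i < j + 1))
    show ‖r i j‖ ≤ 1 + ∑ i' ∈ Finset.range (j + 1), ‖r i' j‖
    linarith
  -- K2 : quotient-type bound for left multiplication
  have hK2 : ∀ (j : ℕ) (y : B), infDist (c j * y) (G j) ≤ (1 + ‖c j‖) * infDist y S := by
    intro j y
    have hne : S.Nonempty := ⟨0, h0S⟩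
    refine le_of_forall_pos_le_add fun ε hε => ?_
    have hδ : 0 < ε / (1 + ‖c j‖) := by positivity
    obtain ⟨s, hs, hds⟩ := (infDist_lt_iff hne).1
      (show infDist y S < infDist y S + ε / (1 + ‖c j‖) by linarith)
    have hmem : c j * s ∈ G j := subset_closure ⟨s, hs, rfl⟩
    have hcpos : (0:ℝ) < 1 + ‖c j‖ := by positivity
    calc infDist (c j * y) (G j) ≤ dist (c j * y) (c j * s) := infDist_le_dist_of_mem hmem
      _ = ‖c j * (y - s)‖ := by rw [dist_eq_norm, mul_sub]
      _ ≤ ‖c j‖ * ‖y - s‖ := norm_mul_le _ _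
      _ ≤ (1 + ‖c j‖) * ‖y - s‖ :=
          mul_le_mul_of_nonneg_right (by linarith [norm_nonneg (c j)]) (norm_nonneg _)
      _ ≤ (1 + ‖c j‖) * (infDist y S + ε / (1 + ‖c j‖)) := by
          apply mul_le_mul_of_nonneg_left ?_ (le_of_lt hcpos)
          rw [← dist_eq_norm]
          linarith
      _ = (1 + ‖c j‖) * infDist y S + ε := by field_simp
  -- K3 : unboundedness at each step
  have hK3 : ∀ (k : ℕ) (M : ℝ) (ε : ℝ), 0 < ε →
      ∃ x : A, ‖x‖ < ε ∧ M < infDist (c (nseq k) * φ x) (G (nseq (k + 1))) := by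
    intro k M ε hε
    by_contra hb
    push_neg at hb
    apply hnne k
    refine Set.Subset.antisymm (hmono (hnge k)) ?_
    have hsubset : (fun s => c (nseq k) * s) '' S ⊆ G (nseq (k + 1)) := by
      rintro _ ⟨s, hs, rfl⟩
      have hG'ne : (G (nseq (k + 1))).Nonempty := ⟨0, h0G _⟩
      have hle : ∀ ν : ℕ, infDist (c (nseq k) * s) (G (nseq (k + 1)))
          ≤ (M + (1 + ‖c (nseq k)‖)) / ((ν : ℝ) + 1) := by
        intro ν
        have hν0 : ((ν : ℂ) + 1) ≠ 0 := by
          have : ((ν : ℂ) + 1) = ((ν + 1 : ℕ) : ℂ) := by push_cast; ring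
          rw [this]
          exact Nat.cast_ne_zero.mpr (Nat.succ_ne_zero ν)
        have hsν : ((ν : ℂ) + 1) • s ∈ S := hsmulS _ hs
        obtain ⟨x, hx1, hx2⟩ := (hchar _).1 hsν (min ε 1) (by positivity)
        have hb' := hb x (lt_of_lt_of_le hx1 (min_le_left _ _))
        have h1 : infDist (((ν : ℂ) + 1) • (c (nseq k) * s)) (G (nseq (k + 1)))
            ≤ M + (1 + ‖c (nseq k)‖) := by
          have htri : infDist (((ν : ℂ) + 1) • (c (nseq k) * s)) (G (nseq (k + 1)))
              ≤ infDist (c (nseq k) * φ x) (G (nseq (k + 1)))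
                + dist (((ν : ℂ) + 1) • (c (nseq k) * s)) (c (nseq k) * φ x) :=
            infDist_le_infDist_add_dist
          have hdist : dist (((ν : ℂ) + 1) • (c (nseq k) * s)) (c (nseq k) * φ x)
              ≤ 1 + ‖c (nseq k)‖ := by
            rw [dist_eq_norm]
            have hid : ((ν : ℂ) + 1) • (c (nseq k) * s) - c (nseq k) * φ x
                = c (nseq k) * (((ν : ℂ) + 1) • s - φ x) := by
              rw [mul_sub, mul_smul_comm]
            rw [hid]
            calc ‖c (nseq k) * (((ν : ℂ) + 1) • s - φ x)‖
                ≤ ‖c (nseq k)‖ * ‖((ν : ℂ) + 1) • s - φ x‖ := norm_mul_le _ _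
              _ ≤ ‖c (nseq k)‖ * 1 := by
                  apply mul_le_mul_of_nonneg_left ?_ (norm_nonneg _)
                  rw [norm_sub_rev]
                  exact le_of_lt (lt_of_lt_of_le hx2 (min_le_right _ _))
              _ ≤ 1 + ‖c (nseq k)‖ := by linarith [norm_nonneg (c (nseq k))]
          linarith
        have h2 : infDist (c (nseq k) * s) (G (nseq (k + 1)))
            ≤ ‖((ν : ℂ) + 1)⁻¹‖ * infDist (((ν : ℂ) + 1) • (c (nseq k) * s)) (G (nseq (k + 1))) := by
          have h3 := infDist_smul_le (Wsub (nseq (k + 1))) (((ν : ℂ) + 1)⁻¹)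
            (((ν : ℂ) + 1) • (c (nseq k) * s))
          rw [inv_smul_smul₀ hν0] at h3
          rw [hGW]
          exact h3
        have hνnorm : ‖((ν : ℂ) + 1)⁻¹‖ = 1 / ((ν : ℝ) + 1) := by
          have h9 : ‖((ν : ℂ) + 1)‖ = (ν : ℝ) + 1 := by
            have h8 : ((ν : ℂ) + 1) = ((((ν : ℝ) + 1) : ℝ) : ℂ) := by push_cast; ring
            rw [h8, Complex.norm_real, Real.norm_eq_abs, abs_of_nonneg (by positivity)]
          rw [norm_inv, h9, one_div]
        have hνpos : (0:ℝ) < (ν : ℝ) + 1 := by positivity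
        calc infDist (c (nseq k) * s) (G (nseq (k + 1)))
            ≤ ‖((ν : ℂ) + 1)⁻¹‖ * infDist (((ν : ℂ) + 1) • (c (nseq k) * s)) (G (nseq (k + 1))) := h2
          _ ≤ ‖((ν : ℂ) + 1)⁻¹‖ * (M + (1 + ‖c (nseq k)‖)) := by
              apply mul_le_mul_of_nonneg_left h1 (norm_nonneg _)
          _ = (M + (1 + ‖c (nseq k)‖)) / ((ν : ℝ) + 1) := by
              rw [hνnorm]; ring
      have hzero : infDist (c (nseq k) * s) (G (nseq (k + 1))) = 0 := by
        refine le_antisymm ?_ infDist_nonneg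
        have htend : Tendsto (fun ν : ℕ => (M + (1 + ‖c (nseq k)‖)) / ((ν : ℝ) + 1))
            atTop (nhds 0) := by
          apply Tendsto.div_atTop tendsto_const_nhds
          exact tendsto_atTop_add_const_right atTop 1 tendsto_natCast_atTop_atTop
        exact le_of_tendsto_of_tendsto' tendsto_const_nhds htend hle
      exact ((hGclosed (nseq (k + 1))).mem_iff_infDist_zero hG'ne).2 hzero
    exact closure_minimal hsubset (hGclosed _)
  -- choose the gliding hump
  let D : ℕ → ℝ := fun k => 2 * ((1 + ‖c (nseq (k + 1))‖) * C₀)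
  let εk : ℕ → ℝ := fun k => (2⁻¹ : ℝ) ^ k / Cb k
  have hεk_pos : ∀ k, 0 < εk k := by
    intro k
    have := hCb_pos k
    show 0 < (2⁻¹ : ℝ) ^ k / Cb k
    positivity
  have hpickE : ∀ (k : ℕ) (M : ℝ), ∃ x : A, ‖x‖ < εk k ∧
      M < infDist (c (nseq k) * φ x) (G (nseq (k + 1))) :=
    fun k M => hK3 k M (εk k) (hεk_pos k)
  choose pick hp1 hp2 using hpickE
  let g : ℕ → A × ℝ := fun k => Nat.rec
    ⟨pick 0 (((0 : ℕ) : ℝ) + 0 + D 0),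
      ‖φ (e (nseq 0) * pick 0 (((0 : ℕ) : ℝ) + 0 + D 0))‖⟩
    (fun k p => ⟨pick (k + 1) ((((k : ℕ) : ℝ) + 1) + p.2 + D (k + 1)),
      p.2 + ‖φ (e (nseq (k + 1)) * pick (k + 1) ((((k : ℕ) : ℝ) + 1) + p.2 + D (k + 1)))‖⟩) k
  let x : ℕ → A := fun k => (g k).1
  let Sa : ℕ → ℝ := fun k => ∑ j ∈ Finset.range k, ‖φ (e (nseq j) * x j)‖
  have hg0 : g 0 = ⟨pick 0 (((0 : ℕ) : ℝ) + 0 + D 0),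
      ‖φ (e (nseq 0) * pick 0 (((0 : ℕ) : ℝ) + 0 + D 0))‖⟩ := rfl
  have hgsucc : ∀ k, g (k + 1) = ⟨pick (k + 1) ((((k : ℕ) : ℝ) + 1) + (g k).2 + D (k + 1)),
      (g k).2 + ‖φ (e (nseq (k + 1)) * pick (k + 1) ((((k : ℕ) : ℝ) + 1) + (g k).2 + D (k + 1)))‖⟩ :=
    fun k => rfl
  have hsndsucc : ∀ k, (g (k + 1)).2 = (g k).2 + ‖φ (e (nseq (k + 1)) * x (k + 1))‖ :=
    fun k => rfl
  have hgσ : ∀ k, (g k).2 = Sa (k + 1) := by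
    intro k
    induction k with
    | zero =>
      show (g 0).2 = ∑ j ∈ Finset.range 1, ‖φ (e (nseq j) * x j)‖
      rw [Finset.sum_range_one]
      rfl
    | succ k ih =>
      show (g (k + 1)).2 = ∑ j ∈ Finset.range (k + 1 + 1), ‖φ (e (nseq j) * x j)‖
      rw [hsndsucc k, ih, Finset.sum_range_succ]
  have hxM : ∀ k : ℕ, (k : ℝ) + Sa k + D k < infDist (c (nseq k) * φ (x k)) (G (nseq (k + 1))) := by
    intro k
    cases k with
    | zero =>
      have h := hp2 0 (((0 : ℕ) : ℝ) + 0 + D 0)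
      have hx0 : x 0 = pick 0 (((0 : ℕ) : ℝ) + 0 + D 0) := rfl
      rw [hx0]
      have hSa0 : Sa 0 = 0 := Finset.sum_range_zero _
      rw [hSa0]
      simpa using h
    | succ k =>
      have h := hp2 (k + 1) ((((k : ℕ) : ℝ) + 1) + (g k).2 + D (k + 1))
      have hx1 : x (k + 1) = pick (k + 1) ((((k : ℕ) : ℝ) + 1) + (g k).2 + D (k + 1)) := rfl
      rw [hx1]
      have : ((k : ℕ) : ℝ) + 1 = ((k + 1 : ℕ) : ℝ) := by push_cast; ring
      rw [← hgσ k]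
      calc ((k + 1 : ℕ) : ℝ) + (g k).2 + D (k + 1)
          = (((k : ℕ) : ℝ) + 1) + (g k).2 + D (k + 1) := by push_cast; ring
        _ < _ := h
  have hxnorm : ∀ k, ‖x k‖ < εk k := by
    intro k
    cases k with
    | zero => exact hp1 0 _
    | succ k => exact hp1 (k + 1) _
  -- the series
  let f : ℕ → A := fun j => e (nseq j) * x j
  have hf_norm : ∀ j, ‖f j‖ ≤ (2⁻¹ : ℝ) ^ j := by
    intro j
    have h1 : ‖e (nseq j)‖ ≤ Cb j := by
      rw [he0 j]; exact hr_le 0 j (Nat.zero_le j)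
    have h2 : ‖x j‖ ≤ εk j := (hxnorm j).le
    calc ‖f j‖ ≤ ‖e (nseq j)‖ * ‖x j‖ := norm_mul_le _ _
      _ ≤ Cb j * εk j := mul_le_mul h1 h2 (norm_nonneg _) (hCb_pos j).le
      _ = (2⁻¹ : ℝ) ^ j := by
          show Cb j * ((2⁻¹ : ℝ) ^ j / Cb j) = _
          rw [mul_div_assoc', mul_comm, mul_div_assoc, div_self (ne_of_gt (hCb_pos _)), mul_one]
  have hgeom : Summable fun j : ℕ => (2⁻¹ : ℝ) ^ j :=
    summable_geometric_of_lt_one (by norm_num) (by norm_num)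
  have hfs : Summable f := Summable.of_norm_bounded hgeom hf_norm
  let X : A := ∑' j, f j
  -- the contradiction
  have hfin : ∀ k : ℕ, (k : ℝ) < ‖φ X‖ := by
    intro k
    -- tail of the series
    let gk : ℕ → A := fun m => r (k + 1) (m + (k + 1)) * x (m + (k + 1))
    have hgk_norm : ∀ m, ‖gk m‖ ≤ (2⁻¹ : ℝ) ^ (m + (k + 1)) := by
      intro m
      have h1 : ‖r (k + 1) (m + (k + 1))‖ ≤ Cb (m + (k + 1)) :=
        hr_le (k + 1) (m + (k + 1)) (by omega)
      have h2 : ‖x (m + (k + 1))‖ ≤ εk (m + (k + 1)) := (hxnorm (m + (k + 1))).le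
      calc ‖gk m‖ ≤ ‖r (k + 1) (m + (k + 1))‖ * ‖x (m + (k + 1))‖ := norm_mul_le _ _
        _ ≤ Cb (m + (k + 1)) * εk (m + (k + 1)) :=
            mul_le_mul h1 h2 (norm_nonneg _) (le_of_lt (hCb_pos _))
        _ = (2⁻¹ : ℝ) ^ (m + (k + 1)) := by
            show Cb (m + (k+1)) * ((2⁻¹ : ℝ) ^ (m + (k+1)) / Cb (m + (k+1))) = _
            rw [mul_div_assoc', mul_comm, mul_div_assoc, div_self (ne_of_gt (hCb_pos _)), mul_one]
    have hgk_norm' : ∀ m, ‖gk m‖ ≤ (2⁻¹ : ℝ) ^ m := by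
      intro m
      refine (hgk_norm m).trans ?_
      apply pow_le_pow_of_le_one (by norm_num) (by norm_num) (by omega)
    have hgks : Summable gk := Summable.of_norm_bounded hgeom hgk_norm'
    let w : A := ∑' m, gk m
    have hw_norm : ‖w‖ ≤ 2 := by
      have h1 : ‖w‖ ≤ ∑' m, ‖gk m‖ :=
        norm_tsum_le_tsum_norm (Summable.of_nonneg_of_le (fun m => norm_nonneg _) hgk_norm' hgeom)
      have h2 : ∑' m, ‖gk m‖ ≤ ∑' m : ℕ, (2⁻¹ : ℝ) ^ m :=
        Summable.tsum_le_tsum hgk_norm' (Summable.of_nonneg_of_le (fun m => norm_nonneg _) hgk_norm' hgeom) hgeom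
      have h3 : ∑' m : ℕ, (2⁻¹ : ℝ) ^ m = 2 := by
        rw [tsum_geometric_of_lt_one (by norm_num) (by norm_num)]
        norm_num
      linarith
    have hdecomp : X = ((∑ j ∈ Finset.range k, f j) + f k) + e (nseq (k + 1)) * w := by
      have h1 : (∑ j ∈ Finset.range (k + 1), f j) + ∑' m, f (m + (k + 1)) = X :=
        Summable.sum_add_tsum_nat_add (k + 1) hfs
      have h2 : ∑' m, f (m + (k + 1)) = e (nseq (k + 1)) * w := by
        have h3 : ∀ m, f (m + (k + 1)) = e (nseq (k + 1)) * gk m := by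
          intro m
          show e (nseq (m + (k + 1))) * x (m + (k + 1)) = _
          rw [hsplit (k + 1) (m + (k + 1)) (by omega), mul_assoc]
        rw [tsum_congr h3]
        exact Summable.tsum_mul_left _ hgks
      rw [← h1, h2, Finset.sum_range_succ]
    have hφX : φ X = ((∑ j ∈ Finset.range k, φ (f j)) + c (nseq k) * φ (x k))
        + c (nseq (k + 1)) * φ w := by
      rw [hdecomp, map_add, map_add, map_sum, map_mul, map_mul, hφe, hφe]
    -- the estimate
    have hP : ‖∑ j ∈ Finset.range k, φ (f j)‖ ≤ Sa k := by
      refine (norm_sum_le _ _).trans ?_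
      apply le_of_eq
      rfl
    have hv : infDist (c (nseq (k + 1)) * φ w) (G (nseq (k + 1))) ≤ D k := by
      have h1 := hK2 (nseq (k + 1)) (φ w)
      have h2 : infDist (φ w) S ≤ C₀ * ‖w‖ := hK1' w
      have h3 : C₀ * ‖w‖ ≤ C₀ * 2 := mul_le_mul_of_nonneg_left hw_norm hC₀
      have h4 : (0:ℝ) < 1 + ‖c (nseq (k + 1))‖ := by positivity
      calc infDist (c (nseq (k + 1)) * φ w) (G (nseq (k + 1)))
          ≤ (1 + ‖c (nseq (k + 1))‖) * infDist (φ w) S := h1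
        _ ≤ (1 + ‖c (nseq (k + 1))‖) * (C₀ * 2) :=
            mul_le_mul_of_nonneg_left (h2.trans h3) (le_of_lt h4)
        _ = D k := by show _ = 2 * ((1 + ‖c (nseq (k + 1))‖) * C₀); ring
    have htri1 : infDist (c (nseq k) * φ (x k)) (G (nseq (k + 1)))
        ≤ infDist (c (nseq k) * φ (x k) + c (nseq (k + 1)) * φ w) (G (nseq (k + 1)))
          + infDist (c (nseq (k + 1)) * φ w) (G (nseq (k + 1))) := by
      have h := infDist_tri (Wsub (nseq (k + 1))) (c (nseq k) * φ (x k)) (c (nseq (k + 1)) * φ w)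
      rw [← hGW] at h
      exact h
    have htri2 : infDist (c (nseq k) * φ (x k) + c (nseq (k + 1)) * φ w) (G (nseq (k + 1)))
        ≤ infDist (φ X) (G (nseq (k + 1))) + Sa k := by
      have h5 : infDist (c (nseq k) * φ (x k) + c (nseq (k + 1)) * φ w) (G (nseq (k + 1)))
          ≤ infDist (φ X) (G (nseq (k + 1)))
            + dist (c (nseq k) * φ (x k) + c (nseq (k + 1)) * φ w) (φ X) :=
        infDist_le_infDist_add_dist
      have h6 : dist (c (nseq k) * φ (x k) + c (nseq (k + 1)) * φ w) (φ X)
          = ‖∑ j ∈ Finset.range k, φ (f j)‖ := by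
        rw [dist_eq_norm, hφX]
        rw [show c (nseq k) * φ (x k) + c (nseq (k + 1)) * φ w
            - (((∑ j ∈ Finset.range k, φ (f j)) + c (nseq k) * φ (x k))
              + c (nseq (k + 1)) * φ w) = -(∑ j ∈ Finset.range k, φ (f j)) by abel]
        rw [norm_neg]
      rw [h6] at h5
      linarith [hP]
    have hbig : (k : ℝ) < infDist (φ X) (G (nseq (k + 1))) := by
      have h1 := hxM k
      linarith
    have hup : infDist (φ X) (G (nseq (k + 1))) ≤ ‖φ X‖ := by
      have h7 : infDist (φ X) (G (nseq (k + 1))) ≤ dist (φ X) 0 :=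
        infDist_le_dist_of_mem (h0G _)
      rwa [dist_zero_right] at h7
    linarith
  obtain ⟨k, hk⟩ := exists_nat_gt ‖φ X‖
  exact absurd (hfin k) (by linarith)

end Stmt15Aux

/-- (Sinclair stability lemma) Let `φ : A → B` be a surjective algebra homomorphism of
Banach algebras and `S(φ)` its separating space. For every sequence `(b_n)` in `B` there
is an `N` such that for all `n ≥ N` the closure of `b_1 b_2 ⋯ b_n S(φ)` equals the closure
of `b_1 b_2 ⋯ b_N S(φ)`, and the closure of `S(φ) b_n b_{n-1} ⋯ b_1` equals the closure of
`S(φ) b_N b_{N-1} ⋯ b_1`. -/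
theorem stmt15 {A B : Type*} [NormedRing A] [NormedAlgebra ℂ A] [CompleteSpace A]
    [NormedRing B] [NormedAlgebra ℂ B] [CompleteSpace B]
    (φ : A →ₐ[ℂ] B) (hφ : Function.Surjective φ)
    (S : Set B)
    (hS : S = {b : B | ∃ a : ℕ → A, Tendsto a atTop (nhds 0) ∧
      Tendsto (fun n => φ (a n)) atTop (nhds b)})
    (b : ℕ → B) :
    ∃ N : ℕ, ∀ n ≥ N,
      closure ((fun s => ((List.range n).map b).prod * s) '' S) =
        closure ((fun s => ((List.range N).map b).prod * s) '' S) ∧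
      closure ((fun s => s * ((List.range n).map b).reverse.prod) '' S) =
        closure ((fun s => s * ((List.range N).map b).reverse.prod) '' S) := by
  obtain ⟨N₁, hN₁⟩ := Stmt15Aux.key φ hφ S hS b
  let φop : Aᵐᵒᵖ →ₐ[ℂ] Bᵐᵒᵖ := AlgHom.op φ
  have hop : ∀ x : A, φop (MulOpposite.op x) = MulOpposite.op (φ x) := fun x => rfl
  have hφop : Function.Surjective φop := by
    intro y
    obtain ⟨u, hu⟩ := hφ y.unop
    exact ⟨MulOpposite.op u, by rw [hop, hu, MulOpposite.op_unop]⟩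
  let Sop : Set Bᵐᵒᵖ := MulOpposite.op '' S
  have hSop : Sop = {b' : Bᵐᵒᵖ | ∃ a' : ℕ → Aᵐᵒᵖ, Tendsto a' atTop (nhds 0) ∧
      Tendsto (fun n => φop (a' n)) atTop (nhds b')} := by
    ext y
    constructor
    · rintro ⟨s, hs, rfl⟩
      rw [hS] at hs
      obtain ⟨a, ha0, hab⟩ := hs
      refine ⟨fun n => MulOpposite.op (a n), ?_, ?_⟩
      · have h := (MulOpposite.continuous_op.tendsto (0 : A)).comp ha0
        simpa [Function.comp_def] using h
      · have h := (MulOpposite.continuous_op.tendsto s).comp hab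
        simpa [Function.comp_def, hop] using h
    · rintro ⟨a', ha0, hab⟩
      refine ⟨MulOpposite.unop y, ?_, MulOpposite.op_unop y⟩
      rw [hS]
      refine ⟨fun n => MulOpposite.unop (a' n), ?_, ?_⟩
      · have h := (MulOpposite.continuous_unop.tendsto (0 : Aᵐᵒᵖ)).comp ha0
        simpa [Function.comp_def] using h
      · have h2 : ∀ n, φ ((a' n).unop) = (φop (a' n)).unop := fun n => rfl
        have h := (MulOpposite.continuous_unop.tendsto y).comp hab
        simp only [Function.comp_def] at h
        simpa only [h2] using h
  obtain ⟨N₂, hN₂⟩ := Stmt15Aux.key φop hφop Sop hSop (fun i => MulOpposite.op (b i))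
  have hprod : ∀ n : ℕ, ((List.range n).map (fun i => MulOpposite.op (b i))).prod
      = MulOpposite.op (((List.range n).map b).reverse.prod) := by
    intro n
    rw [MulOpposite.op_list_prod, List.map_reverse, List.reverse_reverse, List.map_map]
    rfl
  have himg : ∀ n : ℕ,
      (fun s => ((List.range n).map (fun i => MulOpposite.op (b i))).prod * s) '' Sop
      = MulOpposite.op '' ((fun s => s * ((List.range n).map b).reverse.prod) '' S) := by
    intro n
    show (fun s => _) '' (MulOpposite.op '' S) = _
    rw [Set.image_image, Set.image_image]
    apply Set.image_congr
    intro s _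
    rw [hprod]
    exact (MulOpposite.op_mul _ _).symm
  have hcl : ∀ T : Set B, closure (MulOpposite.op '' T) = MulOpposite.op '' closure T := by
    intro T
    exact ((MulOpposite.opHomeomorph (M := B)).image_closure T).symm
  have hops : ∀ n : ℕ,
      closure ((fun s => ((List.range n).map (fun i => MulOpposite.op (b i))).prod * s) '' Sop)
      = MulOpposite.op '' closure ((fun s => s * ((List.range n).map b).reverse.prod) '' S) := by
    intro n; rw [himg, hcl]
  refine ⟨max N₁ N₂, fun n hn => ⟨?_, ?_⟩⟩
  · have h1 := hN₁ n (le_trans (le_max_left _ _) hn)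
    have h2 := hN₁ (max N₁ N₂) (le_max_left _ _)
    rw [h1, h2]
  · have h1 := hN₂ n (le_trans (le_max_right _ _) hn)
    have h2 := hN₂ (max N₁ N₂) (le_max_right _ _)
    rw [hops, hops] at h1 h2
    have h3 := h1.trans h2.symm
    exact Set.image_injective.2 MulOpposite.op_injective h3
end

section
/- Suppose for each letter i ∈ {1,…,d} there exists μ_i ∈ Λ* with μ_i i ∉ Λ*. If a is an operator in the C*-algebra A generated by {T_μ^*T_μ : μ ∈ Λ*} (including I) such that a T_i = 0 for all i = 1,…,d, then a = λ P_∅ for some scalar λ ∈ ℂ. -/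
open ContinuousLinearMap

noncomputable section

variable {d : ℕ} {H : Type*} [NormedAddCommGroup H] [InnerProductSpace ℂ H] [CompleteSpace H]

local notation "⟪" x ", " y "⟫" => @inner ℂ _ _ x y

/-- Extensionality via inner products against a Hilbert basis. -/
lemma hb_ext {ι : Type*} (e : HilbertBasis ι ℂ H) {x y : H}
    (h : ∀ i, ⟪e i, x⟫ = ⟪e i, y⟫) : x = y := by
  refine e.repr.injective ?_
  apply lp.ext
  funext i
  simpa only [e.repr_apply_apply] using h i

/-- The closed star subalgebra of operators diagonal w.r.t. the Hilbert basis `e`. -/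
def Diag {ι : Type*} (e : HilbertBasis ι ℂ H) : StarSubalgebra ℂ (H →L[ℂ] H) where
  carrier := {x | ∀ i, x (e i) ∈ (ℂ ∙ (e i) : Submodule ℂ H)}
  mul_mem' := by
    intro x y hx hy i
    obtain ⟨c, hc⟩ := Submodule.mem_span_singleton.mp (hy i)
    have : (x * y) (e i) = c • x (e i) := by
      simp [mul_apply, ← hc, map_smul]
    rw [this]
    exact Submodule.smul_mem _ _ (hx i)
  add_mem' := by
    intro x y hx hy i
    simpa [add_apply] using Submodule.add_mem _ (hx i) (hy i)
  algebraMap_mem' := by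
    intro r i
    refine Submodule.mem_span_singleton.mpr ⟨r, ?_⟩
    simp [Algebra.algebraMap_eq_smul_one]
  star_mem' := by
    classical
    intro x hx i
    have key : ∀ j, ∃ c : ℂ, x (e j) = c • e j := by
      intro j
      obtain ⟨c, hc⟩ := Submodule.mem_span_singleton.mp (hx j)
      exact ⟨c, hc.symm⟩
    choose c hc using key
    refine Submodule.mem_span_singleton.mpr ⟨starRingEnd ℂ (c i), ?_⟩
    have hstar : (star x : H →L[ℂ] H) = ContinuousLinearMap.adjoint x := rfl
    rw [hstar]
    symm
    refine hb_ext e fun j => ?_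
    rw [ContinuousLinearMap.adjoint_inner_right, hc j, inner_smul_left, inner_smul_right,
      orthonormal_iff_ite.mp e.orthonormal j i]
    by_cases h : j = i <;> simp [h]

lemma Diag_isClosed {ι : Type*} (e : HilbertBasis ι ℂ H) :
    IsClosed ((Diag e : StarSubalgebra ℂ (H →L[ℂ] H)) : Set (H →L[ℂ] H)) := by
  have : ((Diag e : StarSubalgebra ℂ (H →L[ℂ] H)) : Set (H →L[ℂ] H)) =
      ⋂ i, (fun x : H →L[ℂ] H => x (e i)) ⁻¹' (ℂ ∙ (e i) : Submodule ℂ H) := by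
    ext x
    simp [Diag, Set.mem_iInter]
  rw [this]
  refine isClosed_iInter fun i => ?_
  exact (Submodule.closed_of_finiteDimensional _).preimage
    (ContinuousLinearMap.apply ℂ H (e i)).continuous

/-- Suppose that for each letter `i` there is `μ_i ∈ Λ*` with `μ_i i ∉ Λ*`.  If `a` lies
in the C*-algebra generated by `{T_μ^*T_μ : μ ∈ Λ*}` (and `I`) and `a T_i = 0` for all
`i`, then `a = λ P_∅` for some scalar `λ`. -/
theorem stmt17 (Λ : Set (List (Fin d))) (hΛ : IsFactorialLang Λ)
    (e : HilbertBasis {ν : List (Fin d) // ν ∈ Λ} ℂ H)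
    (T : Fin d → H →L[ℂ] H) (hT : IsShift Λ e T)
    (μ : Fin d → List (Fin d)) (hμΛ : ∀ i, μ i ∈ Λ) (hμi : ∀ i, μ i ++ [i] ∉ Λ)
    (a : H →L[ℂ] H)
    (ha : a ∈ (StarAlgebra.adjoin ℂ
      {x : H →L[ℂ] H | ∃ ρ ∈ Λ, x = adjoint (Tw T ρ) * Tw T ρ}).topologicalClosure)
    (ha0 : ∀ i : Fin d, a * T i = 0) :
    ∃ c : ℂ, a = c • (innerSL ℂ (e ⟨[], hΛ.1⟩)).smulRight (e ⟨[], hΛ.1⟩) := by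
  classical
  have ortho := orthonormal_iff_ite.mp e.orthonormal
  -- action of Tw on basis vectors
  have hTw : ∀ (ρ : List (Fin d)) (ν : {ν : List (Fin d) // ν ∈ Λ}),
      Tw T ρ (e ν) = if h : ρ ++ ν.1 ∈ Λ then e ⟨ρ ++ ν.1, h⟩ else 0 := by
    intro ρ
    induction ρ with
    | nil =>
      intro ν
      simp [Tw, ν.2]
    | cons i ρ' ih =>
      intro ν
      have : Tw T (i :: ρ') (e ν) = T i (Tw T ρ' (e ν)) := rfl
      rw [this, ih ν]
      by_cases h' : ρ' ++ ν.1 ∈ Λ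
      · rw [dif_pos h']
        by_cases h : (i :: ρ') ++ ν.1 ∈ Λ
        · rw [dif_pos h]
          exact (hT i ⟨ρ' ++ ν.1, h'⟩).1 h
        · rw [dif_neg h]
          exact (hT i ⟨ρ' ++ ν.1, h'⟩).2 h
      · rw [dif_neg h', dif_neg]
        · simp
        · intro h
          exact h' (hΛ.2 [i] (ρ' ++ ν.1) [] (by simpa using h))
  -- generators are diagonal
  have hgen : {x : H →L[ℂ] H | ∃ ρ ∈ Λ, x = adjoint (Tw T ρ) * Tw T ρ} ⊆ (Diag e : Set _) := by
    rintro x ⟨ρ, -, rfl⟩ ν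
    by_cases h : ρ ++ ν.1 ∈ Λ
    · have h1 : (adjoint (Tw T ρ) * Tw T ρ) (e ν) = adjoint (Tw T ρ) (e ⟨ρ ++ ν.1, h⟩) := by
        rw [ContinuousLinearMap.mul_apply, hTw, dif_pos h]
      have h2 : adjoint (Tw T ρ) (e ⟨ρ ++ ν.1, h⟩) = e ν := by
        refine hb_ext e fun ω => ?_
        rw [ContinuousLinearMap.adjoint_inner_right, hTw]
        by_cases hω : ρ ++ ω.1 ∈ Λ
        · rw [dif_pos hω, ortho, ortho]
          have : (⟨ρ ++ ω.1, hω⟩ : {ν : List (Fin d) // ν ∈ Λ}) = ⟨ρ ++ ν.1, h⟩ ↔ ω = ν := by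
            constructor
            · intro hh
              have := List.append_cancel_left (Subtype.mk_eq_mk.mp hh)
              exact Subtype.ext this
            · rintro rfl; rfl
          by_cases hc : ω = ν
          · rw [if_pos (this.mpr hc), if_pos hc]
          · rw [if_neg (fun hh => hc (this.mp hh)), if_neg hc]
        · rw [dif_neg hω, inner_zero_left, ortho, if_neg]
          intro hh
          exact hω (hh ▸ h)
      rw [h1, h2]
      exact Submodule.mem_span_singleton.mpr ⟨1, (one_smul _ _)⟩
    · have : (adjoint (Tw T ρ) * Tw T ρ) (e ν) = 0 := by
        rw [ContinuousLinearMap.mul_apply, hTw, dif_neg h, map_zero]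
      rw [this]
      exact Submodule.zero_mem _
  have haD : a ∈ Diag e :=
    StarSubalgebra.topologicalClosure_minimal (StarAlgebra.adjoin_le hgen) (Diag_isClosed e) ha
  have key : ∀ ν, ∃ c : ℂ, a (e ν) = c • e ν := by
    intro ν
    obtain ⟨c, hc⟩ := Submodule.mem_span_singleton.mp (haD ν)
    exact ⟨c, hc.symm⟩
  choose c hc using key
  -- a kills all basis vectors except e_∅
  have hkill : ∀ ν : {ν : List (Fin d) // ν ∈ Λ}, ν.1 ≠ [] → a (e ν) = 0 := by
    rintro ⟨ν, hν⟩ hne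
    obtain ⟨i, ν', rfl⟩ : ∃ i ν', ν = i :: ν' := by
      cases ν with
      | nil => exact absurd rfl hne
      | cons i ν' => exact ⟨i, ν', rfl⟩
    have hν' : ν' ∈ Λ := hΛ.2 [i] ν' [] (by simpa using hν)
    have hTi : T i (e ⟨ν', hν'⟩) = e ⟨i :: ν', hν⟩ := (hT i ⟨ν', hν'⟩).1 hν
    calc a (e ⟨i :: ν', hν⟩) = (a * T i) (e ⟨ν', hν'⟩) := by rw [ContinuousLinearMap.mul_apply, hTi]
    _ = 0 := by rw [ha0 i]; rfl
  refine ⟨c ⟨[], hΛ.1⟩, ?_⟩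
  refine ContinuousLinearMap.ext_on
    (Submodule.dense_iff_topologicalClosure_eq_top.mpr e.dense_span) ?_
  rintro x ⟨ν, rfl⟩
  rw [smul_apply, smulRight_apply, innerSL_apply_apply, ortho]
  by_cases hν : ν = ⟨[], hΛ.1⟩
  · subst hν
    rw [if_pos rfl, one_smul, hc]
  · rw [if_neg (fun h => hν h.symm), zero_smul, smul_zero]
    exact hkill ν (fun h => hν (Subtype.ext h))
end
end
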